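/- Let p be a prime with p > n, and let G be a graph on vertex set {1,...,n}. The number of vectors v ∈ (Z/p)^n such that v_i ≠ v_j for all 1 ≤ i < j ≤ n and v_1 - v_j ≠ i for all ij ∈ G (i < j) equals p · Σ_{k=0}^{n-1} (-1)^k · Stir(G, n-k) · (p-k-1)!/(p-n)!. -/

import Mathlib

open Finset Nat

/-- `i` and `j` lie in the same block of the set partition `P`. -/
def sameBlock {n : ℕ} (P : Finpartition (univ : Finset (Fin n))) (i j : Fin n) : Prop :=
  ∃ B ∈ P.parts, i ∈ B ∧ j ∈ B

/-- `(i,j)` is an arc of the arc diagram of `P`: `i < j` lie in the same block and no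
element strictly between them lies in that block. -/
def IsArc {n : ℕ} (P : Finpartition (univ : Finset (Fin n))) (i j : Fin n) : Prop :=
  i < j ∧ sameBlock P i j ∧ ∀ l : Fin n, i < l → l < j → ¬ sameBlock P i l

/-- A set partition is nonnesting if no arc nests strictly inside another. -/
def Nonnesting {n : ℕ} (P : Finpartition (univ : Finset (Fin n))) : Prop :=
  ¬ ∃ i j k l : Fin n, IsArc P i j ∧ IsArc P k l ∧ i < k ∧ k < l ∧ l < j

/-- The number of connected components of a set partition of {1,...,n}:
one more than the number of positions `1 ≤ m < n` at which the partition splits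
into an initial segment and a final segment. -/
def numComponents {n : ℕ} (P : Finpartition (univ : Finset (Fin n))) : ℕ :=
  1 + ((Finset.Ico 1 n).filter
    (fun m => ∀ B ∈ P.parts, (∀ x ∈ B, (x : ℕ) < m) ∨ (∀ x ∈ B, m ≤ (x : ℕ)))).card

/-- `Stir G m`: the number of set partitions of {1,...,n} with `m` blocks all of
whose arcs are edges of `G`. -/
noncomputable def StirG (n : ℕ) (G : Finset (Fin n × Fin n)) (m : ℕ) : ℕ :=
  Nat.card {P : Finpartition (univ : Finset (Fin n)) //
    P.parts.card = m ∧ ∀ i j : Fin n, IsArc P i j → (i, j) ∈ G}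

namespace Stmt7

variable {n : ℕ}

structure IsMatching (S : Finset (Fin n × Fin n)) : Prop where
  lt : ∀ e ∈ S, e.1 < e.2
  left : ∀ e ∈ S, ∀ f ∈ S, e.1 = f.1 → e = f
  right : ∀ e ∈ S, ∀ f ∈ S, e.2 = f.2 → e = f

def Step (S : Finset (Fin n × Fin n)) (a b : Fin n) : Prop := (a, b) ∈ S

def Reach (S : Finset (Fin n × Fin n)) : Fin n → Fin n → Prop :=
  Relation.ReflTransGen (Step S)

def Conn (S : Finset (Fin n × Fin n)) (i j : Fin n) : Prop :=
  ∃ c, Reach S i c ∧ Reach S j c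

lemma reach_le {S : Finset (Fin n × Fin n)} (hS : ∀ e ∈ S, e.1 < e.2) {a b : Fin n}
    (h : Reach S a b) : a ≤ b := by
  induction h with
  | refl => exact le_refl _
  | tail h₁ h₂ ih => exact le_trans ih (le_of_lt (hS _ h₂))

lemma reach_up {S : Finset (Fin n × Fin n)} (hS : IsMatching S) {a b c : Fin n}
    (hac : Reach S a c) (hbc : Reach S b c) : Reach S a b ∨ Reach S b a := by
  induction hac using Relation.ReflTransGen.head_induction_on with
  | refl => exact Or.inr hbc
  | @head x y h₁ h₂ ih =>
    rcases ih with h | h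
    · exact Or.inl (Relation.ReflTransGen.head h₁ h)
    · rcases Relation.ReflTransGen.cases_tail h with rfl | ⟨b', hbb', hstep⟩
      · exact Or.inl (Relation.ReflTransGen.single h₁)
      · have he : ((x, y) : Fin n × Fin n) = (b', y) := hS.right _ h₁ _ hstep rfl
        have hx : x = b' := congrArg Prod.fst he
        exact Or.inr (by rw [hx]; exact hbb')

lemma reach_down {S : Finset (Fin n × Fin n)} (hS : IsMatching S) {j c d : Fin n}
    (hjc : Reach S j c) (hjd : Reach S j d) : Reach S c d ∨ Reach S d c := by
  induction hjc with
  | refl => exact Or.inl hjd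
  | @tail b c hjb hbc ih =>
    rcases ih with h | h
    · rcases Relation.ReflTransGen.cases_head h with rfl | ⟨b₂, hstep, h₂⟩
      · exact Or.inr (Relation.ReflTransGen.single hbc)
      · have he : ((b, c) : Fin n × Fin n) = (b, b₂) := hS.left _ hbc _ hstep rfl
        have hc : c = b₂ := congrArg Prod.snd he
        exact Or.inl (by rw [hc]; exact h₂)
    · exact Or.inr (Relation.ReflTransGen.tail h hbc)

lemma conn_refl (S : Finset (Fin n × Fin n)) (i : Fin n) : Conn S i i :=
  ⟨i, Relation.ReflTransGen.refl, Relation.ReflTransGen.refl⟩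

lemma conn_symm {S : Finset (Fin n × Fin n)} {i j : Fin n} (h : Conn S i j) : Conn S j i :=
  let ⟨c, h1, h2⟩ := h; ⟨c, h2, h1⟩

lemma conn_trans {S : Finset (Fin n × Fin n)} (hS : IsMatching S) {i j k : Fin n}
    (h1 : Conn S i j) (h2 : Conn S j k) : Conn S i k := by
  obtain ⟨c, hic, hjc⟩ := h1
  obtain ⟨d, hjd, hkd⟩ := h2
  rcases reach_down hS hjc hjd with h | h
  · exact ⟨d, hic.trans h, hkd⟩
  · exact ⟨c, hic, hkd.trans h⟩

lemma reach_of_conn_of_le {S : Finset (Fin n × Fin n)} (hS : IsMatching S) {i j : Fin n}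
    (h : Conn S i j) (hij : i ≤ j) : Reach S i j := by
  obtain ⟨c, hic, hjc⟩ := h
  rcases reach_up hS hic hjc with h | h
  · exact h
  · have hji := reach_le hS.lt h
    have : i = j := le_antisymm hij hji
    subst this
    exact Relation.ReflTransGen.refl

lemma step_of_reach_of_ne {S : Finset (Fin n × Fin n)} {i j : Fin n}
    (h : Reach S i j) (hne : i ≠ j) : ∃ b, Step S i b ∧ Reach S b j := by
  rcases Relation.ReflTransGen.cases_head h with rfl | ⟨b, h1, h2⟩
  · exact absurd rfl hne
  · exact ⟨b, h1, h2⟩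


section Blocks

variable {P Q : Finpartition (univ : Finset (Fin n))}

lemma sameBlock_iff_mem_part {i j : Fin n} : sameBlock P i j ↔ j ∈ P.part i := by
  constructor
  · rintro ⟨B, hB, hi, hj⟩
    rw [P.part_eq_of_mem hB hi]
    exact hj
  · intro h
    exact ⟨P.part i, P.part_mem.2 (mem_univ i), P.mem_part (mem_univ i), h⟩

lemma sameBlock_refl (P : Finpartition (univ : Finset (Fin n))) (i : Fin n) : sameBlock P i i :=
  ⟨P.part i, P.part_mem.2 (mem_univ i), P.mem_part (mem_univ i), P.mem_part (mem_univ i)⟩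

lemma sameBlock_symm {i j : Fin n} (h : sameBlock P i j) : sameBlock P j i :=
  let ⟨B, hB, hi, hj⟩ := h; ⟨B, hB, hj, hi⟩

lemma sameBlock_trans {i j k : Fin n} (h1 : sameBlock P i j) (h2 : sameBlock P j k) :
    sameBlock P i k := by
  obtain ⟨B, hB, hi, hj⟩ := h1
  obtain ⟨C, hC, hj', hk⟩ := h2
  have : B = C := P.eq_of_mem_parts hB hC hj hj'
  exact ⟨B, hB, hi, this ▸ hk⟩

/-- The partition of `Fin n` into connected components of a matching. -/
noncomputable def partOf (S : Finset (Fin n × Fin n)) (hS : IsMatching S) :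
    Finpartition (univ : Finset (Fin n)) :=
  @Finpartition.ofSetoid _ _ _ ⟨Conn S, conn_refl S, conn_symm, conn_trans hS⟩
    (fun _ _ => Classical.propDecidable _)

lemma mem_part_ofSetoid' {α : Type*} [DecidableEq α] [Fintype α] (s : Setoid α)
    (inst : DecidableRel s.r) (a b : α) :
    b ∈ (@Finpartition.ofSetoid α _ _ s inst).part a ↔ s.r a b :=
  Finpartition.mem_part_ofSetoid_iff_rel

lemma sameBlock_partOf {S : Finset (Fin n × Fin n)} (hS : IsMatching S) {i j : Fin n} :
    sameBlock (partOf S hS) i j ↔ Conn S i j := by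
  rw [sameBlock_iff_mem_part]
  exact mem_part_ofSetoid' ⟨Conn S, conn_refl S, conn_symm, conn_trans hS⟩
    (fun _ _ => Classical.propDecidable _) i j

lemma isArc_partOf {S : Finset (Fin n × Fin n)} (hS : IsMatching S) {i j : Fin n} :
    IsArc (partOf S hS) i j ↔ (i, j) ∈ S := by
  constructor
  · rintro ⟨hij, hsb, hmin⟩
    have hconn : Conn S i j := (sameBlock_partOf hS).1 hsb
    have hreach : Reach S i j := reach_of_conn_of_le hS hconn hij.le
    obtain ⟨b, hstep, hbj⟩ := step_of_reach_of_ne hreach hij.ne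
    have hib : i < b := hS.lt _ hstep
    have hbj' : b ≤ j := reach_le hS.lt hbj
    rcases lt_or_eq_of_le hbj' with h | h
    · exact absurd ((sameBlock_partOf hS).2 ⟨b, Relation.ReflTransGen.single hstep,
        Relation.ReflTransGen.refl⟩) (hmin b hib h)
    · rw [← h]; exact hstep
  · intro hmem
    refine ⟨hS.lt _ hmem, (sameBlock_partOf hS).2
      ⟨j, Relation.ReflTransGen.single hmem, Relation.ReflTransGen.refl⟩, ?_⟩
    intro l hil hlj hsb
    have hconn := (sameBlock_partOf hS).1 hsb
    have hreach := reach_of_conn_of_le hS hconn hil.le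
    obtain ⟨b, hstep, hbl⟩ := step_of_reach_of_ne hreach hil.ne
    have he : ((i, j) : Fin n × Fin n) = (i, b) := hS.left _ hmem _ hstep rfl
    have hb : j = b := congrArg Prod.snd he
    have : j ≤ l := by rw [hb]; exact reach_le hS.lt hbl
    exact absurd hlj (not_lt.2 this)

/-- The set of arcs of a partition. -/
noncomputable def arcs (P : Finpartition (univ : Finset (Fin n))) : Finset (Fin n × Fin n) :=
  @Finset.filter _ (fun e => IsArc P e.1 e.2) (fun _ => Classical.propDecidable _) univ

lemma mem_arcs {e : Fin n × Fin n} : e ∈ arcs P ↔ IsArc P e.1 e.2 := by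
  simp [arcs, Finset.mem_filter]

lemma exists_isArc {i : Fin n} (h : ∃ l, sameBlock P i l ∧ i < l) :
    ∃ j, IsArc P i j ∧ ∀ l, sameBlock P i l → i < l → j ≤ l := by
  obtain ⟨l0, hl0, hil0⟩ := h
  set T := (P.part i).filter (fun l => i < l) with hT
  have hl0T : l0 ∈ T := by
    rw [hT, Finset.mem_filter]
    exact ⟨sameBlock_iff_mem_part.1 hl0, hil0⟩
  have hne : T.Nonempty := ⟨l0, hl0T⟩
  refine ⟨T.min' hne, ⟨?_, ?_, ?_⟩, ?_⟩
  · exact (Finset.mem_filter.1 (T.min'_mem hne)).2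
  · exact sameBlock_iff_mem_part.2 (Finset.mem_filter.1 (T.min'_mem hne)).1
  · intro l hil hlm hsb
    have : l ∈ T := Finset.mem_filter.2 ⟨sameBlock_iff_mem_part.1 hsb, hil⟩
    exact absurd hlm (not_lt.2 (T.min'_le l this))
  · intro l hsb hil
    exact T.min'_le l (Finset.mem_filter.2 ⟨sameBlock_iff_mem_part.1 hsb, hil⟩)

lemma isMatching_arcs (P : Finpartition (univ : Finset (Fin n))) : IsMatching (arcs P) := by
  constructor
  · intro e he
    exact (mem_arcs.1 he).1
  · intro e he f hf h1
    obtain ⟨he1, he2, he3⟩ := mem_arcs.1 he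
    obtain ⟨hf1, hf2, hf3⟩ := mem_arcs.1 hf
    rcases lt_trichotomy e.2 f.2 with h | h | h
    · exact absurd (h1 ▸ he2) (hf3 e.2 (h1 ▸ he1) h)
    · exact Prod.ext h1 h
    · exact absurd (h1.symm ▸ hf2) (he3 f.2 (h1.symm ▸ hf1) h)
  · intro e he f hf h2
    obtain ⟨he1, he2, he3⟩ := mem_arcs.1 he
    obtain ⟨hf1, hf2, hf3⟩ := mem_arcs.1 hf
    rcases lt_trichotomy e.1 f.1 with h | h | h
    · exact absurd (sameBlock_trans he2 (h2 ▸ sameBlock_symm hf2)) (he3 f.1 h (h2 ▸ hf1))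
    · exact Prod.ext h (by assumption)
    · exact absurd (sameBlock_trans hf2 (h2.symm ▸ sameBlock_symm he2)) (hf3 e.1 h (h2.symm ▸ he1))

lemma sameBlock_of_reach_arcs {i j : Fin n} (h : Reach (arcs P) i j) : sameBlock P i j := by
  induction h with
  | refl => exact sameBlock_refl P i
  | tail h1 h2 ih => exact sameBlock_trans ih (mem_arcs.1 h2).2.1

lemma reach_arcs_of_sameBlock :
    ∀ m : ℕ, ∀ i j : Fin n, (j : ℕ) - (i : ℕ) = m → i ≤ j → sameBlock P i j →
      Reach (arcs P) i j := by
  intro m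
  induction m using Nat.strong_induction_on with
  | _ m ih =>
    intro i j hm hij hsb
    rcases eq_or_lt_of_le hij with rfl | hlt
    · exact Relation.ReflTransGen.refl
    · obtain ⟨j', hj'arc, hmin⟩ := exists_isArc ⟨j, hsb, hlt⟩
      have hj'le : j' ≤ j := hmin j hsb hlt
      have hij' : i < j' := hj'arc.1
      have hsb' : sameBlock P j' j := sameBlock_trans (sameBlock_symm hj'arc.2.1) hsb
      have hlt2 : (j : ℕ) - (j' : ℕ) < m := by
        have h1 : (i : ℕ) < (j' : ℕ) := hij'
        have h2 : (j' : ℕ) ≤ (j : ℕ) := hj'le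
        have h3 : (i : ℕ) < (j : ℕ) := hlt
        omega
      have : Reach (arcs P) j' j := ih _ hlt2 j' j rfl hj'le hsb'
      exact Relation.ReflTransGen.head (mem_arcs.2 hj'arc) this

lemma sameBlock_iff_conn_arcs {i j : Fin n} : sameBlock P i j ↔ Conn (arcs P) i j := by
  constructor
  · intro h
    rcases le_total i j with hle | hle
    · exact ⟨j, reach_arcs_of_sameBlock _ i j rfl hle h, Relation.ReflTransGen.refl⟩
    · exact ⟨i, Relation.ReflTransGen.refl,
        reach_arcs_of_sameBlock _ j i rfl hle (sameBlock_symm h)⟩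
  · rintro ⟨c, h1, h2⟩
    exact sameBlock_trans (sameBlock_of_reach_arcs h1) (sameBlock_symm (sameBlock_of_reach_arcs h2))

lemma part_mem_of_sameBlock_iff (h : ∀ i j : Fin n, sameBlock P i j → sameBlock Q i j)
    {B : Finset (Fin n)} (hB : B ∈ P.parts) (hrev : ∀ i j : Fin n, sameBlock Q i j → sameBlock P i j) :
    B ∈ Q.parts := by
  obtain ⟨i, hi⟩ := P.nonempty_of_mem_parts hB
  have hBeq : B = Q.part i := by
    ext j
    constructor
    · intro hj
      exact sameBlock_iff_mem_part.1 (h i j ⟨B, hB, hi, hj⟩)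
    · intro hj
      obtain ⟨C, hC, hi', hj'⟩ := hrev i j (sameBlock_iff_mem_part.2 hj)
      have : B = C := P.eq_of_mem_parts hB hC hi hi'
      exact this ▸ hj'
  rw [hBeq]
  exact Q.part_mem.2 (mem_univ i)

lemma eq_of_sameBlock_iff (h : ∀ i j : Fin n, sameBlock P i j ↔ sameBlock Q i j) : P = Q := by
  apply Finpartition.ext
  apply Finset.ext
  intro B
  constructor
  · intro hB
    exact part_mem_of_sameBlock_iff (fun i j hij => (h i j).1 hij) hB (fun i j hij => (h i j).2 hij)
  · intro hB
    exact part_mem_of_sameBlock_iff (fun i j hij => (h i j).2 hij) hB (fun i j hij => (h i j).1 hij)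

lemma card_arcs_add (P : Finpartition (univ : Finset (Fin n))) :
    (arcs P).card + P.parts.card = n := by
  classical
  set L := (arcs P).image Prod.fst with hL
  have h1 : (arcs P).card = L.card := by
    rw [hL]
    exact (Finset.card_image_of_injOn (fun e he f hf hef =>
      (isMatching_arcs P).left e he f hf hef)).symm
  have h3 : Lᶜ.card = P.parts.card := by
    apply Finset.card_bij (fun a _ => P.part a)
    · intro a _
      exact P.part_mem.2 (mem_univ a)
    · intro a ha b hb hab
      by_contra hne
      have hsb : sameBlock P a b := by
        refine ⟨P.part a, P.part_mem.2 (mem_univ a), P.mem_part (mem_univ a), ?_⟩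
        rw [hab]; exact P.mem_part (mem_univ b)
      rcases lt_trichotomy a b with hlt | heq | hlt
      · obtain ⟨j, hj, -⟩ := exists_isArc ⟨b, hsb, hlt⟩
        have : a ∈ L := Finset.mem_image.2 ⟨(a, j), mem_arcs.2 hj, rfl⟩
        exact absurd this (Finset.mem_compl.1 ha)
      · exact hne heq
      · obtain ⟨j, hj, -⟩ := exists_isArc ⟨a, sameBlock_symm hsb, hlt⟩
        have : b ∈ L := Finset.mem_image.2 ⟨(b, j), mem_arcs.2 hj, rfl⟩
        exact absurd this (Finset.mem_compl.1 hb)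
    · intro B hB
      have hne := P.nonempty_of_mem_parts hB
      refine ⟨B.max' hne, ?_, P.part_eq_of_mem hB (B.max'_mem hne)⟩
      rw [Finset.mem_compl]
      intro hmem
      obtain ⟨e, he, hfst⟩ := Finset.mem_image.1 hmem
      obtain ⟨hlt', hsb', -⟩ := mem_arcs.1 he
      have : e.2 ∈ B := by
        obtain ⟨C, hC, h1', h2'⟩ := hsb'
        have : C = B := P.eq_of_mem_parts hC hB h1' (hfst ▸ B.max'_mem hne)
        exact this ▸ h2'
      have := B.le_max' e.2 this
      rw [hfst] at hlt'
      exact absurd hlt' (not_lt.2 this)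
  have h2 : L.card + Lᶜ.card = n := by
    rw [Finset.card_add_card_compl]
    simp
  omega

lemma arcs_partOf {S : Finset (Fin n × Fin n)} (hS : IsMatching S) : arcs (partOf S hS) = S := by
  ext e
  rw [mem_arcs, isArc_partOf hS, Prod.mk.eta]

lemma partOf_arcs (P : Finpartition (univ : Finset (Fin n))) :
    partOf (arcs P) (isMatching_arcs P) = P := by
  apply eq_of_sameBlock_iff
  intro i j
  rw [sameBlock_partOf, ← sameBlock_iff_conn_arcs]

/-- The key bijection: matchings contained in G with k arcs correspond to
G-partitions with n - k blocks. -/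
lemma card_matchings (G : Finset (Fin n × Fin n)) (k : ℕ) (hk : k < n) :
    Nat.card {S : Finset (Fin n × Fin n) // S ⊆ G ∧ IsMatching S ∧ S.card = k}
      = StirG n G (n - k) := by
  apply Nat.card_congr
  refine ⟨fun x => ⟨partOf x.1 x.2.2.1, ?_, ?_⟩, fun y => ⟨arcs y.1, ?_, isMatching_arcs _, ?_⟩,
    ?_, ?_⟩
  · obtain ⟨S, hSG, hSM, hSk⟩ := x
    have h := card_arcs_add (partOf S hSM)
    rw [arcs_partOf hSM, hSk] at h
    show (partOf S hSM).parts.card = n - k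
    omega
  · obtain ⟨S, hSG, hSM, hSk⟩ := x
    intro i j hij
    exact hSG ((isArc_partOf hSM).1 hij)
  · obtain ⟨P, hPm, hPG⟩ := y
    intro e he
    have := mem_arcs.1 he
    have := hPG e.1 e.2 this
    rwa [Prod.mk.eta] at this
  · obtain ⟨P, hPm, hPG⟩ := y
    have h := card_arcs_add P
    rw [hPm] at h
    show (arcs P).card = k
    omega
  · rintro ⟨S, hSG, hSM, hSk⟩
    exact Subtype.ext (arcs_partOf hSM)
  · rintro ⟨P, hPm, hPG⟩
    exact Subtype.ext (partOf_arcs P)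

end Blocks


section Counting

variable {p : ℕ}

lemma ne_of_pairwise {v : Fin n → ZMod p} (hv : ∀ i j : Fin n, i < j → v i ≠ v j)
    {i j : Fin n} (hij : i ≠ j) : v i ≠ v j := by
  rcases lt_trichotomy i j with h | h | h
  · exact hv i j h
  · exact absurd h hij
  · exact (hv j i h).symm

lemma cast_succ_inj (hpn : n < p) {a b : Fin n}
    (h : (((a : ℕ) + 1 : ℕ) : ZMod p) = (((b : ℕ) + 1 : ℕ) : ZMod p)) : a = b := by
  haveI : NeZero p := ⟨by omega⟩
  have ha : (a : ℕ) + 1 < p := by have := a.isLt; omega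
  have hb : (b : ℕ) + 1 < p := by have := b.isLt; omega
  have := congrArg ZMod.val h
  rw [ZMod.val_cast_of_lt ha, ZMod.val_cast_of_lt hb] at this
  exact Fin.ext (by omega)

lemma cast_succ_ne_zero (hpn : n < p) (a : Fin n) : (((a : ℕ) + 1 : ℕ) : ZMod p) ≠ 0 := by
  haveI : NeZero p := ⟨by omega⟩
  intro h
  have ha : (a : ℕ) + 1 < p := by have := a.isLt; omega
  have := congrArg ZMod.val h
  rw [ZMod.val_cast_of_lt ha, ZMod.val_zero] at this
  omega

noncomputable def srcE (S : Finset (Fin n × Fin n)) (m : Fin n) : Fin n × Fin n :=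
  if h : ∃ e, e ∈ S ∧ e.2 = m then h.choose else (m, m)

lemma srcE_spec {S : Finset (Fin n × Fin n)} {m : Fin n} (h : ∃ e, e ∈ S ∧ e.2 = m) :
    srcE S m ∈ S ∧ (srcE S m).2 = m := by
  rw [srcE, dif_pos h]
  exact h.choose_spec

lemma srcE_eq {S : Finset (Fin n × Fin n)} (hS : IsMatching S) {e : Fin n × Fin n} (he : e ∈ S) :
    srcE S e.2 = e := by
  obtain ⟨h1, h2⟩ := srcE_spec ⟨e, he, rfl⟩
  exact hS.right _ h1 _ he h2

/-- The set of admissible vectors. -/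
abbrev VType (p : ℕ) (hn : 0 < n) (S : Finset (Fin n × Fin n)) : Type :=
  {v : Fin n → ZMod p // (∀ i j : Fin n, i < j → v i ≠ v j) ∧
      ∀ e ∈ S, v ⟨0, hn⟩ - v e.2 = (((e.1 : ℕ) + 1 : ℕ) : ZMod p)}

abbrev FreeIdx (hn : 0 < n) (S : Finset (Fin n × Fin n)) : Type :=
  {m : Fin n // m ≠ ⟨0, hn⟩ ∧ m ∉ S.image Prod.snd}

abbrev Vals (p : ℕ) (S : Finset (Fin n × Fin n)) : Type :=
  {x : ZMod p // x ≠ 0 ∧ ∀ e ∈ S, x ≠ -(((e.1 : ℕ) + 1 : ℕ) : ZMod p)}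

noncomputable def buildV (p : ℕ) (hn : 0 < n) (S : Finset (Fin n × Fin n)) (a : ZMod p)
    (w : FreeIdx hn S ↪ Vals p S) (m : Fin n) : ZMod p :=
  if h : ∃ e, e ∈ S ∧ e.2 = m then a - ((((srcE S m).1 : ℕ) + 1 : ℕ) : ZMod p)
  else if h2 : m = ⟨0, hn⟩ then a
  else a + (w ⟨m, h2, fun hmem => h (by
    rcases Finset.mem_image.1 hmem with ⟨e, he, hfe⟩
    exact ⟨e, he, hfe⟩)⟩).1

variable {hn : 0 < n} {S : Finset (Fin n × Fin n)} {a : ZMod p} {w : FreeIdx hn S ↪ Vals p S}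

lemma buildV_target (hS : IsMatching S) {e : Fin n × Fin n} (he : e ∈ S) :
    buildV p hn S a w e.2 = a - (((e.1 : ℕ) + 1 : ℕ) : ZMod p) := by
  rw [buildV, dif_pos ⟨e, he, rfl⟩, srcE_eq hS he]

lemma not_target_z0 (hlt : ∀ e ∈ S, e.1 < e.2) : ¬ ∃ e, e ∈ S ∧ e.2 = (⟨0, hn⟩ : Fin n) := by
  rintro ⟨e, he, h2⟩
  have h := hlt e he
  rw [h2] at h
  exact absurd h (by simp [Fin.lt_def])

lemma buildV_z0 (hlt : ∀ e ∈ S, e.1 < e.2) : buildV p hn S a w ⟨0, hn⟩ = a := by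
  rw [buildV, dif_neg (not_target_z0 hlt), dif_pos rfl]

lemma buildV_free {m : Fin n} (h2 : m ≠ ⟨0, hn⟩) (h3 : m ∉ S.image Prod.snd) :
    buildV p hn S a w m = a + (w ⟨m, h2, h3⟩).1 := by
  have h : ¬ ∃ e, e ∈ S ∧ e.2 = m := by
    rintro ⟨e, he, hfe⟩
    exact h3 (Finset.mem_image.2 ⟨e, he, hfe⟩)
  rw [buildV, dif_neg h, dif_neg h2]

lemma buildV_injective (hpn : n < p) (hS : IsMatching S) (a : ZMod p)
    (w : FreeIdx hn S ↪ Vals p S) : Function.Injective (buildV p hn S a w) := by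
  have key : ∀ i : Fin n, (∃ e, e ∈ S ∧ e.2 = i) ∨ i = ⟨0, hn⟩ ∨
      (i ≠ ⟨0, hn⟩ ∧ i ∉ S.image Prod.snd) := by
    intro i
    by_cases h1 : ∃ e, e ∈ S ∧ e.2 = i
    · exact Or.inl h1
    · by_cases h2 : i = ⟨0, hn⟩
      · exact Or.inr (Or.inl h2)
      · refine Or.inr (Or.inr ⟨h2, fun hmem => h1 ?_⟩)
        rcases Finset.mem_image.1 hmem with ⟨e, he, hfe⟩
        exact ⟨e, he, hfe⟩
  -- helper : target value ≠ z0 value, etc.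
  intro i j hij
  rcases key i with ⟨e, he, hei⟩ | hi0 | ⟨hi0, hiT⟩
  · rcases key j with ⟨f, hf, hfj⟩ | hj0 | ⟨hj0, hjT⟩
    · subst hei; subst hfj
      rw [buildV_target hS he, buildV_target hS hf] at hij
      have hcast : (((e.1 : ℕ) + 1 : ℕ) : ZMod p) = (((f.1 : ℕ) + 1 : ℕ) : ZMod p) := by
        linear_combination -hij
      have hef : e.1 = f.1 := cast_succ_inj hpn hcast
      exact congrArg Prod.snd (hS.left _ he _ hf hef)
    · subst hei; subst hj0
      rw [buildV_target hS he, buildV_z0 hS.lt] at hij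
      have : (((e.1 : ℕ) + 1 : ℕ) : ZMod p) = 0 := by linear_combination -hij
      exact absurd this (cast_succ_ne_zero hpn e.1)
    · subst hei
      rw [buildV_target hS he, buildV_free hj0 hjT] at hij
      have : ((w ⟨j, hj0, hjT⟩ : Vals p S) : ZMod p)
          = -(((e.1 : ℕ) + 1 : ℕ) : ZMod p) := by linear_combination -hij
      exact absurd this ((w ⟨j, hj0, hjT⟩).2.2 e he)
  · rcases key j with ⟨f, hf, hfj⟩ | hj0 | ⟨hj0, hjT⟩
    · subst hi0; subst hfj
      rw [buildV_z0 hS.lt, buildV_target hS hf] at hij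
      have : (((f.1 : ℕ) + 1 : ℕ) : ZMod p) = 0 := by linear_combination hij
      exact absurd this (cast_succ_ne_zero hpn f.1)
    · rw [hi0, hj0]
    · subst hi0
      rw [buildV_z0 hS.lt, buildV_free hj0 hjT] at hij
      have : ((w ⟨j, hj0, hjT⟩ : Vals p S) : ZMod p) = 0 := by linear_combination -hij
      exact absurd this (w ⟨j, hj0, hjT⟩).2.1
  · rcases key j with ⟨f, hf, hfj⟩ | hj0 | ⟨hj0, hjT⟩
    · subst hfj
      rw [buildV_free hi0 hiT, buildV_target hS hf] at hij
      have : ((w ⟨i, hi0, hiT⟩ : Vals p S) : ZMod p)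
          = -(((f.1 : ℕ) + 1 : ℕ) : ZMod p) := by linear_combination hij
      exact absurd this ((w ⟨i, hi0, hiT⟩).2.2 f hf)
    · subst hj0
      rw [buildV_free hi0 hiT, buildV_z0 hS.lt] at hij
      have : ((w ⟨i, hi0, hiT⟩ : Vals p S) : ZMod p) = 0 := by linear_combination hij
      exact absurd this (w ⟨i, hi0, hiT⟩).2.1
    · rw [buildV_free hi0 hiT, buildV_free hj0 hjT] at hij
      have h1 : (w ⟨i, hi0, hiT⟩ : Vals p S) = w ⟨j, hj0, hjT⟩ :=
        Subtype.ext (by linear_combination hij)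
      have := w.injective h1
      exact congrArg Subtype.val this

noncomputable def countEquiv (hpn : n < p) (hS : IsMatching S) :
    VType p hn S ≃ ZMod p × (FreeIdx hn S ↪ Vals p S) where
  toFun v := ⟨v.1 ⟨0, hn⟩,
    ⟨fun m => ⟨v.1 m.1 - v.1 ⟨0, hn⟩, sub_ne_zero.2 (ne_of_pairwise v.2.1 m.2.1), by
      intro e he heq
      have h1 := v.2.2 e he
      have hvm : v.1 m.1 = v.1 e.2 := by linear_combination heq + h1
      have hne : m.1 ≠ e.2 := fun h => m.2.2 (Finset.mem_image.2 ⟨e, he, h.symm⟩)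
      exact ne_of_pairwise v.2.1 hne hvm⟩,
    fun m m' h => by
      have h' : v.1 m.1 - v.1 ⟨0, hn⟩ = v.1 m'.1 - v.1 ⟨0, hn⟩ := congrArg Subtype.val h
      have : v.1 m.1 = v.1 m'.1 := by linear_combination h'
      by_contra hne
      exact ne_of_pairwise v.2.1 (fun hh => hne (Subtype.ext hh)) this⟩⟩
  invFun x := ⟨buildV p hn S x.1 x.2, fun i j hij =>
      fun h => absurd (buildV_injective hpn hS x.1 x.2 h) (ne_of_lt hij), by
    intro e he
    rw [buildV_z0 hS.lt, buildV_target hS he]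
    ring⟩
  left_inv v := by
    apply Subtype.ext
    funext m
    show buildV p hn S (v.1 ⟨0, hn⟩) _ m = v.1 m
    by_cases h1 : ∃ e, e ∈ S ∧ e.2 = m
    · obtain ⟨e, he, hem⟩ := h1
      subst hem
      rw [buildV_target hS he]
      have h2 := v.2.2 e he
      linear_combination h2
    · by_cases h2 : m = ⟨0, hn⟩
      · subst h2
        rw [buildV_z0 hS.lt]
      · have h3 : m ∉ S.image Prod.snd := fun hmem => h1 (by
            rcases Finset.mem_image.1 hmem with ⟨e, he, hfe⟩
            exact ⟨e, he, hfe⟩)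
        rw [buildV_free h2 h3]
        show v.1 ⟨0, hn⟩ + (v.1 m - v.1 ⟨0, hn⟩) = v.1 m
        ring
  right_inv x := by
    obtain ⟨a, w⟩ := x
    refine Prod.ext ?_ ?_
    · show buildV p hn S a w ⟨0, hn⟩ = a
      exact buildV_z0 hS.lt
    · apply Function.Embedding.ext
      intro m
      apply Subtype.ext
      show buildV p hn S a w m.1 - buildV p hn S a w ⟨0, hn⟩ = (w m : ZMod p)
      rw [buildV_z0 hS.lt, buildV_free m.2.1 m.2.2]
      ring

lemma card_FreeIdx (hS : IsMatching S) (hn : 0 < n) :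
    Nat.card (FreeIdx hn S) = n - 1 - S.card := by
  classical
  rw [Nat.card_eq_fintype_card, Fintype.card_subtype]
  have hz : (⟨0, hn⟩ : Fin n) ∉ S.image Prod.snd := by
    intro hmem
    rcases Finset.mem_image.1 hmem with ⟨e, he, hfe⟩
    exact not_target_z0 hS.lt ⟨e, he, hfe⟩
  have heq : (univ.filter fun m : Fin n => m ≠ ⟨0, hn⟩ ∧ m ∉ S.image Prod.snd)
      = (insert (⟨0, hn⟩ : Fin n) (S.image Prod.snd))ᶜ := by
    ext m
    simp only [Finset.mem_filter, Finset.mem_compl, Finset.mem_insert, mem_univ, true_and,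
      not_or]
  rw [heq, Finset.card_compl, Finset.card_insert_of_notMem hz,
    Finset.card_image_of_injOn (fun e he f hf h => hS.right e he f hf h)]
  rw [Fintype.card_fin]
  omega

lemma card_Vals (hpn : n < p) (hS : IsMatching S) :
    Nat.card (Vals p S) = p - 1 - S.card := by
  classical
  haveI : NeZero p := ⟨by omega⟩
  rw [Nat.card_eq_fintype_card, Fintype.card_subtype]
  have hz : (0 : ZMod p) ∉ S.image (fun e => -(((e.1 : ℕ) + 1 : ℕ) : ZMod p)) := by
    intro hmem
    rcases Finset.mem_image.1 hmem with ⟨e, he, hfe⟩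
    exact cast_succ_ne_zero hpn e.1 (by linear_combination -hfe)
  have heq : (univ.filter fun x : ZMod p => x ≠ 0 ∧ ∀ e ∈ S, x ≠ -(((e.1 : ℕ) + 1 : ℕ) : ZMod p))
      = (insert (0 : ZMod p) (S.image (fun e => -(((e.1 : ℕ) + 1 : ℕ) : ZMod p))))ᶜ := by
    ext x
    simp only [Finset.mem_filter, Finset.mem_compl, Finset.mem_insert, mem_univ, true_and,
      not_or, Finset.mem_image]
    constructor
    · rintro ⟨h1, h2⟩
      exact ⟨h1, fun ⟨e, he, hfe⟩ => h2 e he hfe.symm⟩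
    · rintro ⟨h1, h2⟩
      exact ⟨h1, fun e he hx => h2 ⟨e, he, hx.symm⟩⟩
  have hinj : Set.InjOn (fun e : Fin n × Fin n => -(((e.1 : ℕ) + 1 : ℕ) : ZMod p)) ↑S := by
    intro e he g hg hfe
    simp only [neg_inj] at hfe
    exact hS.left e (Finset.mem_coe.1 he) g (Finset.mem_coe.1 hg) (cast_succ_inj hpn hfe)
  rw [heq, Finset.card_compl, Finset.card_insert_of_notMem hz,
    Finset.card_image_of_injOn hinj, ZMod.card p]
  omega

lemma card_VType (hpn : n < p) (hS : IsMatching S) (hn0 : 0 < n) :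
    Nat.card (VType p hn0 S) = p * (p - 1 - S.card).descFactorial (n - 1 - S.card) := by
  classical
  haveI : NeZero p := ⟨by omega⟩
  rw [Nat.card_congr (countEquiv hpn hS), Nat.card_prod, Nat.card_zmod]
  congr 1
  rw [Nat.card_eq_fintype_card, Fintype.card_embedding_eq, ← Nat.card_eq_fintype_card,
    ← Nat.card_eq_fintype_card, card_FreeIdx hS hn0, card_Vals hpn hS]

lemma card_VType_not_matching (hpn : n < p) (hlt : ∀ e ∈ S, e.1 < e.2) (hS : ¬ IsMatching S)
    (hn0 : 0 < n) : Nat.card (VType p hn0 S) = 0 := by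
  haveI : IsEmpty (VType p hn0 S) := by
    constructor
    rintro ⟨v, hinj, hforce⟩
    have : ¬ ((∀ e ∈ S, ∀ f ∈ S, e.1 = f.1 → e = f) ∧ ∀ e ∈ S, ∀ f ∈ S, e.2 = f.2 → e = f) :=
      fun ⟨h1, h2⟩ => hS ⟨hlt, h1, h2⟩
    rcases not_and_or.1 this with h | h
    · push_neg at h
      obtain ⟨e, he, f, hf, heq, hne⟩ := h
      have h2 : e.2 ≠ f.2 := fun h => hne (Prod.ext heq h)
      have hve := hforce e he
      have hvf := hforce f hf
      have : v e.2 = v f.2 := by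
        rw [heq] at hve
        linear_combination hvf - hve
      exact ne_of_pairwise hinj h2 this
    · push_neg at h
      obtain ⟨e, he, f, hf, heq, hne⟩ := h
      have h1 : e.1 ≠ f.1 := fun h => hne (Prod.ext h heq)
      have hve := hforce e he
      have hvf := hforce f hf
      rw [heq] at hve
      have : (((e.1 : ℕ) + 1 : ℕ) : ZMod p) = (((f.1 : ℕ) + 1 : ℕ) : ZMod p) := by
        linear_combination hvf - hve
      exact h1 (cast_succ_inj hpn this)
  exact Nat.card_of_isEmpty

end Counting


lemma card_lt_of_matching (hn : 0 < n) {S : Finset (Fin n × Fin n)} (hS : IsMatching S) :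
    S.card < n := by
  have h1 : S.card = (S.image Prod.fst).card :=
    (Finset.card_image_of_injOn fun e he f hf h => hS.left e he f hf h).symm
  have h2 : S.image Prod.fst ⊆ univ.erase ⟨n - 1, by omega⟩ := by
    intro x hx
    rcases Finset.mem_image.1 hx with ⟨e, he, rfl⟩
    refine Finset.mem_erase.2 ⟨?_, mem_univ _⟩
    have hlt := hS.lt e he
    have h3 : (e.2 : ℕ) < n := e.2.isLt
    have h4 : (e.1 : ℕ) < (e.2 : ℕ) := hlt
    intro hh
    have := congrArg Fin.val hh
    simp only at this
    omega
  have h5 := Finset.card_le_card h2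
  rw [Finset.card_erase_of_mem (mem_univ _), Finset.card_univ, Fintype.card_fin] at h5
  omega

lemma fact_aux {n p k : ℕ} (hpn : n < p) (hk : k < n) :
    ((p * (p - 1 - k).descFactorial (n - 1 - k) : ℕ) : ℤ)
      = (p : ℤ) * (((p - k - 1)! / (p - n)! : ℕ) : ℤ) := by
  have h1 : n - 1 - k ≤ p - 1 - k := by omega
  have h2 : p - 1 - k - (n - 1 - k) = p - n := by omega
  have h3 : p - 1 - k = p - k - 1 := by omega
  rw [Nat.descFactorial_eq_div h1, h2, h3, Nat.cast_mul]

end Stmt7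

open Stmt7

/-- for a prime p > n, the number of v ∈ (ℤ/p)ⁿ with pairwise distinct
coordinates and v₁ - vⱼ ≠ i for all edges ij ∈ G (vertices labelled 1,...,n; here
the vertex labelled r corresponds to the index r-1 of `Fin n`) equals
p·Σ_{k=0}^{n-1} (-1)^k Stir(G,n-k) (p-k-1)!/(p-n)!. -/
theorem stmt7 (n p : ℕ) (hn : 0 < n) (hp : p.Prime) (hpn : n < p)
    (G : Finset (Fin n × Fin n)) (hG : ∀ e ∈ G, e.1 < e.2) :
    (Nat.card {v : Fin n → ZMod p // (∀ i j : Fin n, i < j → v i ≠ v j) ∧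
        ∀ e ∈ G, v ⟨0, hn⟩ - v e.2 ≠ (((e.1 : ℕ) + 1 : ℕ) : ZMod p)} : ℤ) =
      (p : ℤ) * ∑ k ∈ range n,
        (-1 : ℤ) ^ k * StirG n G (n - k) * (((p - k - 1)! / (p - n)! : ℕ) : ℤ) := by
  classical
  haveI : NeZero p := ⟨by omega⟩
  set χ : (Fin n × Fin n) → (Fin n → ZMod p) → ℤ :=
    fun e v => if v ⟨0, hn⟩ - v e.2 = (((e.1 : ℕ) + 1 : ℕ) : ZMod p) then 1 else 0 with hχ
  set VA : Finset (Fin n → ZMod p) :=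
    univ.filter (fun v => ∀ i j : Fin n, i < j → v i ≠ v j) with hVA
  have step1 : (Nat.card {v : Fin n → ZMod p // (∀ i j : Fin n, i < j → v i ≠ v j) ∧
        ∀ e ∈ G, v ⟨0, hn⟩ - v e.2 ≠ (((e.1 : ℕ) + 1 : ℕ) : ZMod p)} : ℤ)
      = ∑ v ∈ VA, ∏ e ∈ G, (1 - χ e v) := by
    have hval : ∀ v ∈ VA, ∏ e ∈ G, (1 - χ e v)
        = if (∀ e ∈ G, v ⟨0, hn⟩ - v e.2 ≠ (((e.1 : ℕ) + 1 : ℕ) : ZMod p)) then (1 : ℤ)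
          else 0 := by
      intro v _
      by_cases h : ∀ e ∈ G, v ⟨0, hn⟩ - v e.2 ≠ (((e.1 : ℕ) + 1 : ℕ) : ZMod p)
      · rw [if_pos h]
        apply Finset.prod_eq_one
        intro e he
        rw [hχ]
        simp only
        rw [if_neg (h e he)]
        ring
      · rw [if_neg h]
        push_neg at h
        obtain ⟨e, he, heq⟩ := h
        apply Finset.prod_eq_zero he
        rw [hχ]
        simp only
        rw [if_pos heq]
        ring
    rw [Finset.sum_congr rfl hval, Finset.sum_boole, hVA, Finset.filter_filter,
      Nat.card_eq_fintype_card, Fintype.card_subtype]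
  have step2 : ∀ v : Fin n → ZMod p, ∏ e ∈ G, (1 - χ e v)
      = ∑ S ∈ G.powerset, (-1 : ℤ) ^ S.card * ∏ e ∈ S, χ e v := by
    intro v
    have h1 : ∀ e ∈ G, (1 - χ e v) = (-χ e v) + 1 := fun e _ => by ring
    rw [Finset.prod_congr rfl h1, Finset.prod_add]
    apply Finset.sum_congr rfl
    intro S _
    rw [Finset.prod_const_one, mul_one]
    have h2 : ∏ e ∈ S, (-χ e v) = (-1 : ℤ) ^ S.card * ∏ e ∈ S, χ e v := by
      rw [← Finset.prod_const (-1 : ℤ), ← Finset.prod_mul_distrib]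
      exact Finset.prod_congr rfl fun e _ => by ring
    rw [h2]
  have step3 : ∑ v ∈ VA, ∑ S ∈ G.powerset, (-1 : ℤ) ^ S.card * ∏ e ∈ S, χ e v
      = ∑ S ∈ G.powerset, (-1 : ℤ) ^ S.card * (Nat.card (VType p hn S) : ℤ) := by
    rw [Finset.sum_comm]
    apply Finset.sum_congr rfl
    intro S _
    rw [← Finset.mul_sum]
    congr 1
    have hval : ∀ v ∈ VA, ∏ e ∈ S, χ e v
        = if (∀ e ∈ S, v ⟨0, hn⟩ - v e.2 = (((e.1 : ℕ) + 1 : ℕ) : ZMod p)) then (1 : ℤ)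
          else 0 := by
      intro v _
      by_cases h : ∀ e ∈ S, v ⟨0, hn⟩ - v e.2 = (((e.1 : ℕ) + 1 : ℕ) : ZMod p)
      · rw [if_pos h]
        apply Finset.prod_eq_one
        intro e he
        rw [hχ]
        simp only
        rw [if_pos (h e he)]
      · rw [if_neg h]
        push_neg at h
        obtain ⟨e, he, heq⟩ := h
        apply Finset.prod_eq_zero he
        rw [hχ]
        simp only
        rw [if_neg heq]
    rw [Finset.sum_congr rfl hval, Finset.sum_boole, hVA, Finset.filter_filter,
      Nat.card_eq_fintype_card, Fintype.card_subtype]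
  have step4 : ∑ S ∈ G.powerset, (-1 : ℤ) ^ S.card * (Nat.card (VType p hn S) : ℤ)
      = ∑ S ∈ G.powerset.filter IsMatching,
          (-1 : ℤ) ^ S.card * ((p * (p - 1 - S.card).descFactorial (n - 1 - S.card) : ℕ) : ℤ) := by
    rw [Finset.sum_filter]
    apply Finset.sum_congr rfl
    intro S hS
    by_cases h : IsMatching S
    · rw [if_pos h, card_VType hpn h hn]
    · rw [if_neg h,
        card_VType_not_matching hpn (fun e he => hG e (Finset.mem_powerset.1 hS he)) h hn]
      simp
  have hmaps : ∀ S ∈ G.powerset.filter IsMatching, S.card ∈ range n := by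
    intro S hS
    exact Finset.mem_range.2 (card_lt_of_matching hn (Finset.mem_filter.1 hS).2)
  have step5 : ∑ S ∈ G.powerset.filter IsMatching,
        (-1 : ℤ) ^ S.card * ((p * (p - 1 - S.card).descFactorial (n - 1 - S.card) : ℕ) : ℤ)
      = ∑ k ∈ range n, ((G.powerset.filter IsMatching).filter (fun S => S.card = k)).card
          * ((-1 : ℤ) ^ k * ((p * (p - 1 - k).descFactorial (n - 1 - k) : ℕ) : ℤ)) := by
    rw [← Finset.sum_fiberwise_of_maps_to hmaps]
    apply Finset.sum_congr rfl
    intro k _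
    have : ∀ S ∈ (G.powerset.filter IsMatching).filter (fun S => S.card = k),
        (-1 : ℤ) ^ S.card * ((p * (p - 1 - S.card).descFactorial (n - 1 - S.card) : ℕ) : ℤ)
          = (-1 : ℤ) ^ k * ((p * (p - 1 - k).descFactorial (n - 1 - k) : ℕ) : ℤ) := by
      intro S hS
      rw [(Finset.mem_filter.1 hS).2]
    rw [Finset.sum_congr rfl this, Finset.sum_const, nsmul_eq_mul]
  have step6 : ∀ k ∈ range n,
      (((G.powerset.filter IsMatching).filter (fun S => S.card = k)).card : ℤ)
        = (StirG n G (n - k) : ℤ) := by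
    intro k hk
    congr 1
    rw [← card_matchings G k (Finset.mem_range.1 hk),
      ← Nat.card_eq_finsetCard]
    apply Nat.card_congr
    apply Equiv.subtypeEquivRight
    intro S
    simp only [Finset.mem_filter, Finset.mem_powerset, and_assoc]
  have step7 : ∀ k ∈ range n,
      ((p * (p - 1 - k).descFactorial (n - 1 - k) : ℕ) : ℤ)
        = (p : ℤ) * (((p - k - 1)! / (p - n)! : ℕ) : ℤ) := by
    intro k hk
    exact fact_aux hpn (Finset.mem_range.1 hk)
  rw [step1, Finset.sum_congr rfl (fun v _ => step2 v), step3, step4, step5, Finset.mul_sum]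
  apply Finset.sum_congr rfl
  intro k hk
  rw [step6 k hk, step7 k hk]
  ring
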